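/- Fix λ_p>0 and assume 0<β_I<∞ and k := ∫_{ℝ²}β(y)f(y)dy ∈ (0,∞). Define the outage probability γ(c̄) = 1 − P₁(c̄,λ_p)P₂(c̄) for c̄>0, and assume γ is strictly increasing on (0,∞). Then the constrained transmission capacity C*(ε,T) = λ_p(1−ε)·sup{c̄>0 : γ(c̄) ≤ ε} satisfies C*(ε,T) = (1−ε)·(ε λ_p/(λ_p β_I + k) + o(ε)) as ε→0⁺; equivalently lim_{ε→0⁺} C*(ε,T)/(ε(1−ε)) = λ_p/(λ_p β_I + k). In particular, lim_{c̄→0⁺} γ(c̄)/c̄ = λ_p β_I + k. -/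

import Mathlib

open MeasureTheory ProbabilityTheory Filter Real
open scoped ProbabilityTheory

local notation "E2" => EuclideanSpace ℝ (Fin 2)

noncomputable def auxφ (t : ℝ) : ℝ := if t = 0 then 1 else (1 - Real.exp (-t)) / t

theorem auxφ_id (t : ℝ) : 1 - Real.exp (-t) = auxφ t * t := by
  unfold auxφ
  by_cases h : t = 0
  · simp [h]
  · rw [if_neg h]; field_simp

theorem auxφ_cont : Tendsto auxφ (nhds 0) (nhds 1) := by
  rw [← nhdsNE_sup_pure (0:ℝ)]
  refine Tendsto.sup ?_ ?_
  · have hd : HasDerivAt (fun t : ℝ => 1 - Real.exp (-t)) 1 0 := by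
      simpa using ((hasDerivAt_id (0:ℝ)).neg.exp).const_sub 1
    have hs := hasDerivAt_iff_tendsto_slope.mp hd
    refine hs.congr' ?_
    filter_upwards [self_mem_nhdsWithin] with t ht
    simp only [Set.mem_compl_iff, Set.mem_singleton_iff] at ht
    simp [auxφ, ht, slope_def_field, div_eq_inv_mul]
  · simpa [auxφ] using tendsto_pure_nhds auxφ 0

theorem aux_slope (b : ℝ) :
    Tendsto (fun c : ℝ => (1 - Real.exp (-(c * b))) / c) (nhdsWithin 0 (Set.Ioi 0)) (nhds b) := by
  have hd : HasDerivAt (fun c : ℝ => 1 - Real.exp (-(c * b))) b 0 := by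
    have h1 : HasDerivAt (fun c : ℝ => -(c * b)) (-b) 0 := by
      exact (hasDerivAt_mul_const b).neg
    have h2 := (h1.exp).const_sub 1
    simpa using h2
  have hs := hasDerivAt_iff_tendsto_slope.mp hd
  have hmono : nhdsWithin (0:ℝ) (Set.Ioi 0) ≤ nhdsWithin 0 {(0:ℝ)}ᶜ := by
    apply nhdsWithin_mono
    intro x hx
    exact ne_of_gt hx
  refine (hs.mono_left hmono).congr fun c => ?_
  simp [slope_def_field, div_eq_inv_mul]

theorem aux_inv (γ : ℝ → ℝ) (L : ℝ) (hL : 0 < L)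
    (hmono : StrictMonoOn γ (Set.Ioi 0))
    (hlim : Tendsto (fun c => γ c / c) (nhdsWithin 0 (Set.Ioi 0)) (nhds L)) :
    Tendsto (fun ε => sSup {c : ℝ | 0 < c ∧ γ c ≤ ε} / ε)
      (nhdsWithin 0 (Set.Ioi 0)) (nhds L⁻¹) := by
  rw [Metric.tendsto_nhdsWithin_nhds] at hlim ⊢
  intro η hη
  set δ : ℝ := min (1/2) (η * L / 4) with hδdef
  have hδpos : 0 < δ := lt_min (by norm_num) (by positivity)
  have hδhalf : δ ≤ 1/2 := min_le_left _ _
  have h1d : (0:ℝ) < 1 - δ := by linarith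
  have h1d' : (0:ℝ) < 1 + δ := by linarith
  have hδη : 2 * δ / L < η := by
    have h1 : δ ≤ η * L / 4 := min_le_right _ _
    rw [div_lt_iff₀ hL]
    nlinarith
  obtain ⟨c₀, hc₀pos, hc₀⟩ := hlim (δ * L) (by positivity)
  have hbound : ∀ c : ℝ, 0 < c → c < c₀ →
      (1 - δ) * L * c < γ c ∧ γ c < (1 + δ) * L * c := by
    intro c hc hcc
    have := hc₀ (x := c) hc (by rwa [Real.dist_eq, sub_zero, abs_of_pos hc])
    rw [Real.dist_eq, abs_lt] at this
    constructor
    · have h2 : (1 - δ) * L < γ c / c := by nlinarith [this.1]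
      calc (1 - δ) * L * c < (γ c / c) * c := by nlinarith
        _ = γ c := by field_simp
    · have h2 : γ c / c < (1 + δ) * L := by nlinarith [this.2]
      calc γ c = (γ c / c) * c := by field_simp
        _ < (1 + δ) * L * c := by nlinarith
  have hLc₀ : 0 < L * c₀ := mul_pos hL hc₀pos
  refine ⟨(1 - δ) * L * c₀ / 2, by nlinarith, ?_⟩
  intro ε hε hεdist
  simp only [Set.mem_Ioi] at hε
  rw [Real.dist_eq, sub_zero, abs_of_pos hε] at hεdist
  set Sset : Set ℝ := {c : ℝ | 0 < c ∧ γ c ≤ ε} with hSdef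
  set clow : ℝ := ε / ((1 + δ) * L) with hclowdef
  set cup : ℝ := ε / ((1 - δ) * L) with hcupdef
  have hclowpos : 0 < clow := div_pos hε (by positivity)
  have hclowlt : clow < c₀ := by
    rw [hclowdef, div_lt_iff₀ (by positivity)]
    nlinarith
  have hclowmem : clow ∈ Sset := by
    refine ⟨hclowpos, ?_⟩
    have h3 := (hbound clow hclowpos hclowlt).2
    have hle : (1 + δ) * L * clow = ε := by
      rw [hclowdef]; field_simp
    linarith
  have hub : ∀ c ∈ Sset, c ≤ cup := by
    rintro c ⟨hc, hγc⟩
    rcases lt_or_ge c c₀ with hcase | hcase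
    · have h4 := (hbound c hc hcase).1
      rw [hcupdef, le_div_iff₀ (mul_pos h1d hL)]
      nlinarith
    · exfalso
      have h1 : γ (c₀ / 2) < γ c :=
        hmono (Set.mem_Ioi.mpr (half_pos hc₀pos)) (Set.mem_Ioi.mpr hc) (by linarith)
      have h2 := (hbound (c₀/2) (half_pos hc₀pos) (by linarith)).1
      nlinarith
  have hbdd : BddAbove Sset := ⟨cup, hub⟩
  have hS1 : clow ≤ sSup Sset := le_csSup hbdd hclowmem
  have hS2 : sSup Sset ≤ cup := csSup_le ⟨clow, hclowmem⟩ hub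
  rw [Real.dist_eq, abs_lt]
  have hcupε : cup / ε = ((1 - δ) * L)⁻¹ := by rw [hcupdef]; field_simp
  have hclowε : clow / ε = ((1 + δ) * L)⁻¹ := by rw [hclowdef]; field_simp
  have hdiv1 : sSup Sset / ε ≤ ((1 - δ) * L)⁻¹ := by
    rw [← hcupε]; gcongr
  have hdiv2 : ((1 + δ) * L)⁻¹ ≤ sSup Sset / ε := by
    rw [← hclowε]; gcongr
  have e1 : ((1 - δ) * L)⁻¹ ≤ L⁻¹ + 2 * δ / L := by
    have h5 : (1:ℝ) / ((1 - δ) * L) ≤ (1 + 2 * δ) / L := by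
      rw [div_le_div_iff₀ (by positivity) hL]
      nlinarith [mul_nonneg (mul_nonneg hδpos.le (by linarith : (0:ℝ) ≤ 1 - 2*δ)) hL.le]
    rw [inv_eq_one_div, inv_eq_one_div, ← add_div]
    linarith [h5]
  have e2 : L⁻¹ - 2 * δ / L ≤ ((1 + δ) * L)⁻¹ := by
    have h5 : (1 - 2 * δ) / L ≤ (1:ℝ) / ((1 + δ) * L) := by
      rw [div_le_div_iff₀ hL (by positivity)]
      nlinarith [mul_nonneg (mul_nonneg hδpos.le hδpos.le) hL.le, mul_nonneg hδpos.le hL.le]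
    have h6 : L⁻¹ - 2 * δ / L = (1 - 2*δ)/L := by
      rw [inv_eq_one_div, div_sub_div_same]
    rw [h6, inv_eq_one_div]
    exact h5
  constructor
  · linarith
  · linarith

set_option maxHeartbeats 1000000 in
theorem stmt_11
    (g f : E2 → ℝ) (T R lamp : ℝ)
    (hT : 0 < T) (hR : 0 < R) (hlamp : 0 < lamp)
    (hg_pos : ∀ x : E2, x ≠ 0 → 0 < g x)
    (hg_cont : ContinuousOn g {(0 : E2)}ᶜ)
    (hg_mono : ∀ x y : E2, x ≠ 0 → y ≠ 0 → ‖x‖ ≤ ‖y‖ → g y ≤ g x)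
    (hg_int : ∀ δ : ℝ, 0 < δ → IntegrableOn g (Metric.ball (0 : E2) δ)ᶜ)
    (hf_meas : Measurable f) (hf_nonneg : ∀ x, 0 ≤ f x)
    (hf_prob : ∫ x, f x = 1)
    (hf_iso : ∀ x y : E2, ‖x‖ = ‖y‖ → f x = f y)
    (z : E2) (hz : z = EuclideanSpace.single (0 : Fin 2) R)
    (β : E2 → ℝ)
    (hβ : ∀ y, β y = ∫ x, g (x - y - z) / (g z / T + g (x - y - z)) * f x)
    (βI : ℝ) (hβI : βI = ∫ u, g u / (g z / T + g u))
    (hβI_fin : Integrable fun u : E2 => g u / (g z / T + g u))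
    (hβI_pos : 0 < βI)
    (k : ℝ) (hk : k = ∫ y, β y * f y)
    (hk_fin : Integrable fun y => β y * f y) (hk_pos : 0 < k)
    (γ : ℝ → ℝ)
    (hγ : ∀ cbar, γ cbar =
      1 - Real.exp (-(lamp * ∫ y, (1 - Real.exp (-(cbar * β y))))) *
        ∫ y, Real.exp (-(cbar * β y)) * f y)
    (hγ_mono : StrictMonoOn γ (Set.Ioi 0))
    (Cstar : ℝ → ℝ)
    (hCstar : ∀ ε, Cstar ε = lamp * (1 - ε) * sSup {c : ℝ | 0 < c ∧ γ c ≤ ε}) :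
    Tendsto (fun ε => Cstar ε / (ε * (1 - ε))) (nhdsWithin 0 (Set.Ioi 0))
        (nhds (lamp / (lamp * βI + k))) ∧
      Tendsto (fun c => γ c / c) (nhdsWithin 0 (Set.Ioi 0)) (nhds (lamp * βI + k)) := by
  -- basic positivity facts
  have hz_ne : z ≠ 0 := by
    intro h0
    have h1 : z 0 = R := by rw [hz]; simp [EuclideanSpace.single_apply]
    rw [h0] at h1
    simp at h1
    exact hR.ne h1
  have hgz : 0 < g z := hg_pos z hz_ne
  have hH_pos : ∀ u : E2, u ≠ 0 → 0 < g u / (g z / T + g u) := by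
    intro u hu
    have h1 := hg_pos u hu
    have h2 : 0 < g z / T := div_pos hgz hT
    positivity
  have hf_int : Integrable f := by
    by_contra h
    rw [integral_undef h] at hf_prob
    norm_num at hf_prob
  have hf_aesm : AEStronglyMeasurable f (volume : Measure E2) := hf_meas.aestronglyMeasurable
  -- the interference kernel
  set H : E2 → ℝ := fun u => g u / (g z / T + g u) with hH
  have hH_int : Integrable H (volume : Measure E2) := hβI_fin
  -- the product function
  have hΨ : MeasurePreserving (fun p : E2 × E2 => (p.2, p.2 - p.1 - z))
      ((volume : Measure E2).prod volume) (volume.prod volume) := by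
    have h := (((MeasurePreserving.id (volume : Measure E2)).prod
        ((measurePreserving_sub_right (volume : Measure E2) z).comp
          (Measure.measurePreserving_neg _))).comp
        (measurePreserving_prod_sub (volume : Measure E2) volume)).comp
        (Measure.measurePreserving_swap (μ := (volume : Measure E2)) (ν := volume))
    have he : (fun p : E2 × E2 => (p.2, p.2 - p.1 - z)) =
        (Prod.map (id : E2 → E2) (fun w : E2 => -w - z)) ∘
          ((fun p : E2 × E2 => (p.1, p.2 - p.1)) ∘ Prod.swap) := by
      funext p
      simp [Prod.map, neg_sub]
    rw [he]
    exact h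
  have hG : Integrable (fun p : E2 × E2 => f p.1 * H p.2)
      ((volume : Measure E2).prod volume) := hf_int.mul_prod hH_int
  have hF_int : Integrable (fun p : E2 × E2 => H (p.2 - p.1 - z) * f p.2)
      ((volume : Measure E2).prod volume) := by
    have h := (hΨ.integrable_comp hG.aestronglyMeasurable).mpr hG
    exact h.congr (Filter.Eventually.of_forall fun p => mul_comm _ _)
  -- β as a partial integral
  have hβ_eq : β = fun y => ∫ x, H (x - y - z) * f x := funext fun y => hβ y
  have hβ_int : Integrable β (volume : Measure E2) := by
    rw [hβ_eq]
    exact hF_int.integral_prod_left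
  have hβ_meas : AEStronglyMeasurable β (volume : Measure E2) := hβ_int.aestronglyMeasurable
  have hnull : ∀ y : E2, ∀ᵐ x : E2, x - y - z ≠ 0 := by
    intro y
    have h1 : {x : E2 | x - y - z = 0} = {y + z} := by
      ext x
      simp [sub_sub, sub_eq_zero]
    rw [ae_iff]
    simp only [not_not]
    rw [h1]
    exact measure_singleton _
  have hβ_nonneg : ∀ y, 0 ≤ β y := by
    intro y
    rw [hβ y]
    apply integral_nonneg_of_ae
    filter_upwards [hnull y] with x hx
    exact mul_nonneg (hH_pos _ hx).le (hf_nonneg x)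
  -- Fubini: ∫ β = βI
  have hβ_integral : (∫ y, β y) = βI := by
    rw [hβ_eq]
    have huncurry : Integrable (Function.uncurry fun y x => H (x - y - z) * f x)
        ((volume : Measure E2).prod volume) := by
      exact hF_int
    rw [integral_integral_swap huncurry]
    have hinner : ∀ x : E2, (∫ y, H (x - y - z) * f x) = βI * f x := by
      intro x
      rw [integral_mul_const]
      congr 1
      have h2 : ∀ y : E2, x - y - z = (x - z) - y := fun y => sub_right_comm x y z
      simp_rw [h2]
      rw [integral_sub_left_eq_self H volume (x - z)]
      exact hβI.symm
    simp_rw [hinner]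
    rw [integral_const_mul, hf_prob, mul_one]
  -- dominated convergence : first limit
  have limA : Tendsto (fun c => (∫ y, (1 - Real.exp (-(c * β y)))) / c)
      (nhdsWithin 0 (Set.Ioi 0)) (nhds βI) := by
    have hDCT := tendsto_integral_filter_of_dominated_convergence (μ := (volume : Measure E2))
        (l := nhdsWithin (0:ℝ) (Set.Ioi 0))
        (F := fun c y => (1 - Real.exp (-(c * β y))) / c) (f := β) β
        (Filter.Eventually.of_forall fun c => by
          exact Continuous.comp_aestronglyMeasurable
            (g := fun t : ℝ => (1 - Real.exp (-(c * t))) / c) (by fun_prop) hβ_meas)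
        (by
          filter_upwards [self_mem_nhdsWithin] with c hc
          refine Filter.Eventually.of_forall fun y => ?_
          simp only [Set.mem_Ioi] at hc
          have hb := hβ_nonneg y
          have h1 : Real.exp (-(c * β y)) ≤ 1 := by
            rw [← Real.exp_zero]
            exact Real.exp_le_exp.mpr (by nlinarith)
          have h2 : 1 - Real.exp (-(c * β y)) ≤ c * β y := by
            nlinarith [Real.add_one_le_exp (-(c * β y))]
          rw [Real.norm_eq_abs, abs_of_nonneg (div_nonneg (by linarith) hc.le),
            div_le_iff₀ hc]
          nlinarith)
        hβ_int
        (Filter.Eventually.of_forall fun y => aux_slope (β y))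
    rw [hβ_integral] at hDCT
    refine hDCT.congr fun c => ?_
    exact integral_div c _
  -- dominated convergence : second limit
  have limB : Tendsto (fun c => (1 - ∫ y, Real.exp (-(c * β y)) * f y) / c)
      (nhdsWithin 0 (Set.Ioi 0)) (nhds k) := by
    have hDCT := tendsto_integral_filter_of_dominated_convergence (μ := (volume : Measure E2))
        (l := nhdsWithin (0:ℝ) (Set.Ioi 0))
        (F := fun c y => (1 - Real.exp (-(c * β y))) * f y / c)
        (f := fun y => β y * f y) (fun y => β y * f y)
        (Filter.Eventually.of_forall fun c => by
          exact ((((Continuous.comp_aestronglyMeasurable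
            (g := fun t : ℝ => 1 - Real.exp (-(c * t))) (by fun_prop) hβ_meas).mul
            hf_aesm).aemeasurable.div_const c).aestronglyMeasurable))
        (by
          filter_upwards [self_mem_nhdsWithin] with c hc
          refine Filter.Eventually.of_forall fun y => ?_
          simp only [Set.mem_Ioi] at hc
          have hb := hβ_nonneg y
          have hfy := hf_nonneg y
          have h1 : Real.exp (-(c * β y)) ≤ 1 := by
            rw [← Real.exp_zero]
            exact Real.exp_le_exp.mpr (by nlinarith)
          have h2 : 1 - Real.exp (-(c * β y)) ≤ c * β y := by
            nlinarith [Real.add_one_le_exp (-(c * β y))]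
          rw [Real.norm_eq_abs,
            abs_of_nonneg (div_nonneg (mul_nonneg (by linarith) hfy) hc.le),
            div_le_iff₀ hc]
          nlinarith)
        hk_fin
        (Filter.Eventually.of_forall fun y => by
          have h := (aux_slope (β y)).mul_const (f y)
          refine h.congr fun c => ?_
          rw [div_mul_eq_mul_div])
    rw [← hk] at hDCT
    refine hDCT.congr' ?_
    filter_upwards [self_mem_nhdsWithin] with c hc
    simp only [Set.mem_Ioi] at hc
    have hb : ∀ y, Real.exp (-(c * β y)) ≤ 1 := by
      intro y
      rw [← Real.exp_zero]
      exact Real.exp_le_exp.mpr (by nlinarith [hβ_nonneg y])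
    have hexp_int : Integrable (fun y => Real.exp (-(c * β y)) * f y) (volume : Measure E2) := by
      refine hf_int.mono
        ((Continuous.comp_aestronglyMeasurable
          (g := fun t : ℝ => Real.exp (-(c * t))) (by fun_prop) hβ_meas).mul hf_aesm) ?_
      refine Filter.Eventually.of_forall fun y => ?_
      rw [Real.norm_eq_abs, Real.norm_eq_abs,
        abs_of_nonneg (mul_nonneg (Real.exp_pos _).le (hf_nonneg y)),
        abs_of_nonneg (hf_nonneg y)]
      nlinarith [hb y, hf_nonneg y, (Real.exp_pos (-(c * β y))).le]
    rw [integral_div]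
    congr 1
    have h3 : (fun y => (1 - Real.exp (-(c * β y))) * f y) =
        fun y => f y - Real.exp (-(c * β y)) * f y := by
      funext y; ring
    rw [h3, integral_sub hf_int hexp_int, hf_prob]
  -- limit of γ c / c
  have hγdiv : Tendsto (fun c => γ c / c) (nhdsWithin 0 (Set.Ioi 0))
      (nhds (lamp * βI + k)) := by
    have hid0 : Tendsto (fun c : ℝ => c) (nhdsWithin 0 (Set.Ioi 0)) (nhds 0) :=
      Filter.tendsto_id.mono_left nhdsWithin_le_nhds
    have hA0 : Tendsto (fun c => ∫ y, (1 - Real.exp (-(c * β y))))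
        (nhdsWithin 0 (Set.Ioi 0)) (nhds 0) := by
      have h := limA.mul hid0
      rw [mul_zero] at h
      refine h.congr' ?_
      filter_upwards [self_mem_nhdsWithin] with c hc
      simp only [Set.mem_Ioi] at hc
      rw [div_mul_cancel₀ _ hc.ne']
    have hlA0 : Tendsto (fun c => lamp * ∫ y, (1 - Real.exp (-(c * β y))))
        (nhdsWithin 0 (Set.Ioi 0)) (nhds 0) := by
      simpa using hA0.const_mul lamp
    have hexp : Tendsto (fun c => Real.exp (-(lamp * ∫ y, (1 - Real.exp (-(c * β y))))))
        (nhdsWithin 0 (Set.Ioi 0)) (nhds 1) := by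
      have hneg : Tendsto (fun c => -(lamp * ∫ y, (1 - Real.exp (-(c * β y)))))
          (nhdsWithin 0 (Set.Ioi 0)) (nhds 0) := by simpa using hlA0.neg
      have h := (Real.continuous_exp.tendsto 0).comp hneg
      rw [Real.exp_zero] at h
      exact h
    have hphi : Tendsto (fun c => auxφ (lamp * ∫ y, (1 - Real.exp (-(c * β y)))))
        (nhdsWithin 0 (Set.Ioi 0)) (nhds 1) := auxφ_cont.comp hlA0
    have hterm1 : Tendsto
        (fun c => (1 - Real.exp (-(lamp * ∫ y, (1 - Real.exp (-(c * β y)))))) / c)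
        (nhdsWithin 0 (Set.Ioi 0)) (nhds (lamp * βI)) := by
      have h := hphi.mul (limA.const_mul lamp)
      rw [one_mul] at h
      refine h.congr fun c => ?_
      rw [auxφ_id (lamp * ∫ y, (1 - Real.exp (-(c * β y))))]
      ring
    have hterm2 : Tendsto
        (fun c => Real.exp (-(lamp * ∫ y, (1 - Real.exp (-(c * β y))))) *
          ((1 - ∫ y, Real.exp (-(c * β y)) * f y) / c))
        (nhdsWithin 0 (Set.Ioi 0)) (nhds k) := by
      have h := hexp.mul limB
      rwa [one_mul] at h
    have hsum := hterm1.add hterm2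
    refine hsum.congr fun c => ?_
    rw [hγ c]
    ring
  refine ⟨?_, hγdiv⟩
  -- first limit via the inverse lemma
  have hLpos : 0 < lamp * βI + k := by positivity
  have hS := aux_inv γ (lamp * βI + k) hLpos hγ_mono hγdiv
  have h := hS.const_mul lamp
  rw [show lamp * (lamp * βI + k)⁻¹ = lamp / (lamp * βI + k) from (div_eq_mul_inv _ _).symm] at h
  refine h.congr' ?_
  have h1 : ∀ᶠ ε in nhdsWithin (0:ℝ) (Set.Ioi 0), ε < 1 := by
    have h2 : Set.Iio (1:ℝ) ∈ nhds (0:ℝ) := Iio_mem_nhds (by norm_num)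
    exact Filter.eventually_of_mem (mem_nhdsWithin_of_mem_nhds h2) fun x hx => hx
  filter_upwards [self_mem_nhdsWithin, h1] with ε hε hε1
  simp only [Set.mem_Ioi] at hε
  rw [hCstar ε]
  have hε1' : (1:ℝ) - ε ≠ 0 := by linarith
  field_simp
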